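/- Let d ≥ 1, let S be a finite set of points in ℝ^d, let k be an integer with 1 ≤ k ≤ |S|, and let σ : {1,…,k} → S be injective. Then p = Σ_{i=1}^k (k+1−i)·σ(i) is an extreme point of the ordered k-set polytope P_k(S) if and only if there exists c ∈ ℝ^d with ⟨c,σ(1)⟩ > ⟨c,σ(2)⟩ > … > ⟨c,σ(k)⟩ and ⟨c,σ(k)⟩ > ⟨c,s⟩ for all s ∈ S outside the image of σ. -/

import Mathlib

open scoped RealInnerProductSpace Pointwise
open MeasureTheory

attribute [local instance] Classical.decEq

noncomputable section

abbrev E (d : ℕ) := EuclideanSpace ℝ (Fin d)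

/-- The unordered k-set polytope `Q_k(S)`: convex hull of the points `∑_{s ∈ A} s`
where `A` ranges over k-element subsets of `S`. -/
def unorderedKSetPolytope (d k : ℕ) (S : Finset (E d)) : Set (E d) :=
  convexHull ℝ {p | ∃ A : Finset (E d), A ⊆ S ∧ A.card = k ∧ p = ∑ s ∈ A, s}

/-- The ordered k-set polytope `P_k(S)`: convex hull of the points
`∑_{i=1}^k (k+1-i) • σ(i)` (here `σ` is 0-indexed, so the weight of `σ i` is `k - i`)
where `σ` ranges over injective maps from `{1,…,k}` into `S`. -/
def orderedKSetPolytope (d k : ℕ) (S : Finset (E d)) : Set (E d) :=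
  convexHull ℝ {p | ∃ σ : Fin k → E d, Function.Injective σ ∧ (∀ i, σ i ∈ S) ∧
    p = ∑ i : Fin k, ((k - (i : ℕ) : ℕ) : ℝ) • σ i}

/-- The normal cone of a set `P` at a point `p`. -/
def normalCone {d : ℕ} (P : Set (E d)) (p : E d) : Set (E d) :=
  {c | ∀ x ∈ P, ⟪c, x⟫ ≤ ⟪c, p⟫}

/-! ### Auxiliary lemmas -/

lemma inner_sum_smul {d k : ℕ} (c : E d) (w : Fin k → ℝ) (v : Fin k → E d) :
    ⟪c, ∑ i, w i • v i⟫ = ∑ i, w i * ⟪c, v i⟫ := by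
  rw [inner_sum]; simp only [real_inner_smul_right]

lemma abel_sum {k : ℕ} (x : Fin k → ℝ) :
    ∑ i : Fin k, ((k - (i : ℕ) : ℕ) : ℝ) * x i
      = ∑ m : Fin k, ∑ i ∈ Finset.Iic m, x i := by
  have h1 : ∀ m : Fin k, ∑ i ∈ Finset.Iic m, x i
      = ∑ i : Fin k, if i ≤ m then x i else 0 := by
    intro m
    rw [← Finset.sum_filter]
    congr 1
    ext i; simp
  simp_rw [h1]
  rw [Finset.sum_comm]
  refine Finset.sum_congr rfl fun i _ => ?_
  rw [Finset.sum_ite, Finset.sum_const_zero, add_zero, Finset.sum_const, nsmul_eq_mul]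
  congr 1
  have : Finset.univ.filter (fun m : Fin k => i ≤ m) = Finset.Ici i := by
    ext m; simp
  rw [this, Fin.card_Ici]

lemma level_le {d k : ℕ} {S : Finset (E d)} {c : E d} {σ : Fin k → E d}
    (hσinj : Function.Injective σ)
    (hdom : ∀ (m : Fin k) (s : E d), s ∈ S → (∀ j : Fin k, j ≤ m → s ≠ σ j) → ⟪c, s⟫ < ⟪c, σ m⟫)
    (hrank_le : ∀ i j : Fin k, i ≤ j → ⟪c, σ j⟫ ≤ ⟪c, σ i⟫)
    {σ' : Fin k → E d} (hinj' : Function.Injective σ') (hS' : ∀ i, σ' i ∈ S) (m : Fin k) :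
    (∑ i ∈ Finset.Iic m, ⟪c, σ' i⟫ ≤ ∑ i ∈ Finset.Iic m, ⟪c, σ i⟫) ∧
    ((Finset.Iic m).image σ' ≠ (Finset.Iic m).image σ →
      ∑ i ∈ Finset.Iic m, ⟪c, σ' i⟫ < ∑ i ∈ Finset.Iic m, ⟪c, σ i⟫) := by
  classical
  set A := (Finset.Iic m).image σ' with hA
  set B := (Finset.Iic m).image σ with hB
  have hsum' : ∑ i ∈ Finset.Iic m, ⟪c, σ' i⟫ = ∑ a ∈ A, ⟪c, a⟫ :=
    (Finset.sum_image (fun x _ y _ h => hinj' h)).symm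
  have hsum : ∑ i ∈ Finset.Iic m, ⟪c, σ i⟫ = ∑ a ∈ B, ⟪c, a⟫ :=
    (Finset.sum_image (fun x _ y _ h => hσinj h)).symm
  have hcard : A.card = B.card := by
    rw [hA, hB, Finset.card_image_of_injective _ hinj', Finset.card_image_of_injective _ hσinj]
  have hcard2 : (A \ B).card = (B \ A).card := Finset.card_sdiff_comm hcard
  have hub : ∀ a ∈ A \ B, ⟪c, a⟫ < ⟪c, σ m⟫ := by
    intro a ha
    obtain ⟨haA, haB⟩ := Finset.mem_sdiff.1 ha
    obtain ⟨i, hi, rfl⟩ := Finset.mem_image.1 haA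
    refine hdom m _ (hS' i) fun j hj hj' => haB ?_
    exact Finset.mem_image.2 ⟨j, Finset.mem_Iic.2 hj, hj'.symm⟩
  have hlb : ∀ b ∈ B \ A, ⟪c, σ m⟫ ≤ ⟪c, b⟫ := by
    intro b hb
    obtain ⟨j, hj, rfl⟩ := Finset.mem_image.1 (Finset.mem_sdiff.1 hb).1
    exact hrank_le j m (Finset.mem_Iic.1 hj)
  have hABle : ∑ a ∈ A \ B, ⟪c, a⟫ ≤ (A \ B).card • ⟪c, σ m⟫ :=
    Finset.sum_le_card_nsmul _ _ _ fun a ha => (hub a ha).le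
  have hBAle : (B \ A).card • ⟪c, σ m⟫ ≤ ∑ b ∈ B \ A, ⟪c, b⟫ :=
    Finset.card_nsmul_le_sum _ _ _ hlb
  have hsplitA : ∑ a ∈ A ∩ B, ⟪c, a⟫ + ∑ a ∈ A \ B, ⟪c, a⟫ = ∑ a ∈ A, ⟪c, a⟫ :=
    Finset.sum_inter_add_sum_sdiff A B _
  have hsplitB : ∑ a ∈ B ∩ A, ⟪c, a⟫ + ∑ a ∈ B \ A, ⟪c, a⟫ = ∑ a ∈ B, ⟪c, a⟫ :=
    Finset.sum_inter_add_sum_sdiff B A _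
  have hinter : A ∩ B = B ∩ A := Finset.inter_comm A B
  constructor
  · rw [hsum', hsum]
    rw [← hsplitA, ← hsplitB, hinter]
    have : (A \ B).card • ⟪c, σ m⟫ = (B \ A).card • ⟪c, σ m⟫ := by rw [hcard2]
    linarith [hABle, hBAle, this ▸ hABle]
  · intro hne
    have hne' : (A \ B).Nonempty := by
      rw [Finset.sdiff_nonempty]
      intro hsub
      exact hne (Finset.eq_of_subset_of_card_le hsub (le_of_eq hcard.symm))
    have hABlt : ∑ a ∈ A \ B, ⟪c, a⟫ < (A \ B).card • ⟪c, σ m⟫ := by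
      have := Finset.sum_lt_sum_of_nonempty hne' hub
      simpa using this
    rw [hsum', hsum, ← hsplitA, ← hsplitB, hinter]
    have heq : ((A \ B).card : ℕ) • ⟪c, σ m⟫ = ((B \ A).card : ℕ) • ⟪c, σ m⟫ := by rw [hcard2]
    linarith [hABlt, hBAle, heq ▸ hABlt]

lemma key_strict {d k : ℕ} (hk1 : 1 ≤ k) {S : Finset (E d)} {c : E d} {σ : Fin k → E d}
    (hσinj : Function.Injective σ)
    (hrank : ∀ i j : Fin k, i < j → ⟪c, σ j⟫ < ⟪c, σ i⟫)
    (hout : ∀ s ∈ S, s ∉ Set.range σ → ⟪c, s⟫ < ⟪c, σ ⟨k - 1, by omega⟩⟫)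
    {σ' : Fin k → E d} (hinj' : Function.Injective σ') (hS' : ∀ i, σ' i ∈ S)
    (hne : σ' ≠ σ) :
    ∑ i : Fin k, ((k - (i : ℕ) : ℕ) : ℝ) * ⟪c, σ' i⟫
      < ∑ i : Fin k, ((k - (i : ℕ) : ℕ) : ℝ) * ⟪c, σ i⟫ := by
  classical
  have hrank_le : ∀ i j : Fin k, i ≤ j → ⟪c, σ j⟫ ≤ ⟪c, σ i⟫ := by
    intro i j hij
    rcases eq_or_lt_of_le hij with rfl | h
    · exact le_rfl
    · exact (hrank i j h).le
  have hdom : ∀ (m : Fin k) (s : E d), s ∈ S → (∀ j : Fin k, j ≤ m → s ≠ σ j) →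
      ⟪c, s⟫ < ⟪c, σ m⟫ := by
    intro m s hs hne'
    by_cases hr : s ∈ Set.range σ
    · obtain ⟨j, rfl⟩ := hr
      have hmj : m < j := by
        by_contra h
        exact hne' j (le_of_not_gt h) rfl
      exact hrank m j hmj
    · refine lt_of_lt_of_le (hout s hs hr) (hrank_le m ⟨k - 1, by omega⟩ ?_)
      exact Fin.le_def.2 (by simp; omega)
  have hTne : (Finset.univ.filter fun m : Fin k => σ' m ≠ σ m).Nonempty := by
    obtain ⟨m, hm⟩ := Function.ne_iff.1 hne
    exact ⟨m, by simp [hm]⟩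
  set m₀ := (Finset.univ.filter fun m : Fin k => σ' m ≠ σ m).min' hTne with hm₀
  have hm₀mem : σ' m₀ ≠ σ m₀ := by
    have := (Finset.univ.filter fun m : Fin k => σ' m ≠ σ m).min'_mem hTne
    simpa using this
  have hmin : ∀ j : Fin k, j < m₀ → σ' j = σ j := by
    intro j hj
    by_contra h
    exact absurd (Finset.min'_le _ j (by simp [h])) (not_le.2 hj)
  have himg : (Finset.Iic m₀).image σ' ≠ (Finset.Iic m₀).image σ := by
    intro h
    have h1 : σ' m₀ ∈ (Finset.Iic m₀).image σ := by
      rw [← h]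
      exact Finset.mem_image.2 ⟨m₀, Finset.mem_Iic.2 le_rfl, rfl⟩
    obtain ⟨j, hj, hj'⟩ := Finset.mem_image.1 h1
    rcases eq_or_lt_of_le (Finset.mem_Iic.1 hj) with rfl | hlt
    · exact hm₀mem hj'.symm
    · have h2 := hmin j hlt
      have h3 : σ' m₀ = σ' j := by rw [h2]; exact hj'.symm
      exact absurd (hinj' h3).symm (ne_of_lt hlt)
  rw [abel_sum, abel_sum]
  refine Finset.sum_lt_sum (fun m _ => (level_le hσinj hdom hrank_le hinj' hS' m).1) ?_
  exact ⟨m₀, Finset.mem_univ _, (level_le hσinj hdom hrank_le hinj' hS' m₀).2 himg⟩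

lemma extreme_of_strict_max {d : ℕ} {V : Set (E d)} {p c : E d} (hp : p ∈ V)
    (h : ∀ x ∈ V, x ≠ p → ⟪c, x⟫ < ⟪c, p⟫) :
    p ∈ Set.extremePoints ℝ (convexHull ℝ V) := by
  classical
  have hVle : ∀ x ∈ V, ⟪c, x⟫ ≤ ⟪c, p⟫ := by
    intro x hx
    rcases eq_or_ne x p with rfl | hne
    · exact le_rfl
    · exact (h x hx hne).le
  refine exposedPoints_subset_extremePoints ?_
  refine ⟨subset_convexHull ℝ V hp, innerSL ℝ c, fun y hy => ⟨?_, ?_⟩⟩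
  · have hconv : Convex ℝ {y : E d | ⟪c, y⟫ ≤ ⟪c, p⟫} := by
      refine convex_halfSpace_le
        ⟨fun a b => inner_add_right c a b, fun r a => real_inner_smul_right c a r⟩ _
    exact convexHull_min hVle hconv hy
  · intro hle
    rw [convexHull_eq] at hy
    obtain ⟨ι, t, wt, z, hw0, hw1, hz, hyc⟩ := hy
    have hyeq : y = ∑ i ∈ t, wt i • z i := by
      rw [← hyc, Finset.centerMass_eq_of_sum_1 _ _ hw1]
    have hinner : ⟪c, y⟫ = ∑ i ∈ t, wt i * ⟪c, z i⟫ := by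
      rw [hyeq, inner_sum]
      simp only [real_inner_smul_right]
    have hterm : ∀ i ∈ t, wt i * ⟪c, z i⟫ ≤ wt i * ⟪c, p⟫ := fun i hi =>
      mul_le_mul_of_nonneg_left (hVle _ (hz i hi)) (hw0 i hi)
    have hsumt : ∑ i ∈ t, wt i * ⟪c, p⟫ = ⟪c, p⟫ := by
      rw [← Finset.sum_mul, hw1, one_mul]
    have hall : ∀ i ∈ t, wt i • z i = wt i • p := by
      intro i hi
      rcases eq_or_ne (wt i) 0 with h0 | h0
      · simp [h0]
      by_contra hzi
      have hzp : z i ≠ p := fun he => hzi (by rw [he])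
      have hwpos : 0 < wt i := (hw0 i hi).lt_of_ne (Ne.symm h0)
      have hstrict : ∑ j ∈ t, wt j * ⟪c, z j⟫ < ∑ j ∈ t, wt j * ⟪c, p⟫ :=
        Finset.sum_lt_sum hterm
          ⟨i, hi, mul_lt_mul_of_pos_left (h _ (hz i hi) hzp) hwpos⟩
      rw [hsumt, ← hinner] at hstrict
      have hpy : ⟪c, p⟫ ≤ ⟪c, y⟫ := hle
      linarith
    calc y = ∑ i ∈ t, wt i • z i := hyeq
      _ = ∑ i ∈ t, wt i • p := Finset.sum_congr rfl hall
      _ = (∑ i ∈ t, wt i) • p := (Finset.sum_smul).symm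
      _ = p := by rw [hw1, one_smul]

lemma swap_diff {d k : ℕ} (σ : Fin k → E d) (i j : Fin k) (hij : i ≠ j) :
    (∑ m : Fin k, ((k - (m : ℕ) : ℕ) : ℝ) • σ (Equiv.swap i j m))
      - ∑ m : Fin k, ((k - (m : ℕ) : ℕ) : ℝ) • σ m
    = (((k - (j : ℕ) : ℕ) : ℝ) - ((k - (i : ℕ) : ℕ) : ℝ)) • (σ i - σ j) := by
  classical
  set w : Fin k → ℝ := fun m => ((k - (m : ℕ) : ℕ) : ℝ) with hw
  have step1 : ∑ m : Fin k, w m • σ (Equiv.swap i j m)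
      = ∑ m : Fin k, w (Equiv.swap i j m) • σ m := by
    calc ∑ m : Fin k, w m • σ (Equiv.swap i j m)
        = ∑ m : Fin k, w (Equiv.swap i j (Equiv.swap i j m)) • σ (Equiv.swap i j m) := by
          simp [Equiv.swap_apply_self]
      _ = ∑ m : Fin k, w (Equiv.swap i j m) • σ m :=
          Equiv.sum_comp (Equiv.swap i j) (fun m => w (Equiv.swap i j m) • σ m)
  rw [step1, ← Finset.sum_sub_distrib]
  simp_rw [← sub_smul]
  have hzero : ∀ m ∈ Finset.univ, m ∉ ({i, j} : Finset (Fin k)) →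
      (w (Equiv.swap i j m) - w m) • σ m = 0 := by
    intro m _ hm
    simp only [Finset.mem_insert, Finset.mem_singleton, not_or] at hm
    rw [Equiv.swap_apply_of_ne_of_ne hm.1 hm.2, sub_self, zero_smul]
  rw [← Finset.sum_subset (Finset.subset_univ ({i, j} : Finset (Fin k))) hzero]
  rw [Finset.sum_pair hij, Equiv.swap_apply_left, Equiv.swap_apply_right]
  module

lemma update_diff {d k : ℕ} (σ : Fin k → E d) (l : Fin k) (s : E d) :
    (∑ m : Fin k, ((k - (m : ℕ) : ℕ) : ℝ) • (Function.update σ l s m))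
      - ∑ m : Fin k, ((k - (m : ℕ) : ℕ) : ℝ) • σ m
    = ((k - (l : ℕ) : ℕ) : ℝ) • (s - σ l) := by
  classical
  rw [← Finset.sum_sub_distrib]
  simp_rw [← smul_sub]
  have hzero : ∀ m ∈ Finset.univ, m ∉ ({l} : Finset (Fin k)) →
      ((k - (m : ℕ) : ℕ) : ℝ) • (Function.update σ l s m - σ m) = 0 := by
    intro m _ hm
    simp only [Finset.mem_singleton] at hm
    rw [Function.update_of_ne hm, sub_self, smul_zero]
  rw [← Finset.sum_subset (Finset.subset_univ ({l} : Finset (Fin k))) hzero]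
  rw [Finset.sum_singleton, Function.update_self]

lemma update_inj {d k : ℕ} {σ : Fin k → E d} (hσinj : Function.Injective σ)
    {s : E d} (hs : s ∉ Set.range σ) (l : Fin k) :
    Function.Injective (Function.update σ l s) := by
  intro a b h
  by_cases ha : a = l <;> by_cases hb : b = l
  · rw [ha, hb]
  · rw [ha, Function.update_self, Function.update_of_ne hb] at h
    exact absurd ⟨b, h.symm⟩ hs
  · rw [hb, Function.update_self, Function.update_of_ne ha] at h
    exact absurd ⟨a, h⟩ hs
  · rw [Function.update_of_ne ha, Function.update_of_ne hb] at h
    exact hσinj h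

/-- `∑_i (k+1-i) • σ(i)` is an extreme point of the ordered k-set polytope iff there is a
`c` with `⟨c,σ(1)⟩ > … > ⟨c,σ(k)⟩` and `⟨c,σ(k)⟩ > ⟨c,s⟩` for `s ∈ S` outside the image
of `σ`. -/
theorem extremePoint_iff_strict_ranking_ordered
    (d : ℕ) (hd : 1 ≤ d) (S : Finset (E d)) (k : ℕ) (hk1 : 1 ≤ k) (hk2 : k ≤ S.card)
    (σ : Fin k → E d) (hσinj : Function.Injective σ) (hσS : ∀ i, σ i ∈ S) :
    (∑ i : Fin k, ((k - (i : ℕ) : ℕ) : ℝ) • σ i) ∈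
        Set.extremePoints ℝ (orderedKSetPolytope d k S) ↔
      ∃ c : E d, (∀ i j : Fin k, i < j → ⟪c, σ j⟫ < ⟪c, σ i⟫) ∧
        ∀ s ∈ S, s ∉ Set.range σ → ⟪c, s⟫ < ⟪c, σ ⟨k - 1, by omega⟩⟫ := by
  classical
  set V : Set (E d) := {p | ∃ σ' : Fin k → E d, Function.Injective σ' ∧ (∀ i, σ' i ∈ S) ∧
    p = ∑ i : Fin k, ((k - (i : ℕ) : ℕ) : ℝ) • σ' i} with hVdef
  have hPoly : orderedKSetPolytope d k S = convexHull ℝ V := rfl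
  set p : E d := ∑ i : Fin k, ((k - (i : ℕ) : ℕ) : ℝ) • σ i with hpdef
  have hpV : p ∈ V := ⟨σ, hσinj, hσS, rfl⟩
  rw [hPoly]
  constructor
  · intro hext
    -- finiteness of the vertex set
    have hVfin : V.Finite := by
      have hsub : V ⊆ (fun g : Fin k → E d => ∑ i : Fin k, ((k - (i : ℕ) : ℕ) : ℝ) • g i) ''
          {g : Fin k → E d | ∀ i, g i ∈ (S : Set (E d))} := by
        rintro x ⟨σ', _, h2, rfl⟩
        exact ⟨σ', fun i => h2 i, rfl⟩
      exact ((Set.Finite.pi' fun _ => S.finite_toSet).image _).subset hsub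
    -- p is not in the hull of the other points
    have hne_hull : p ∉ convexHull ℝ (V \ {p}) := by
      have h1 := (convex_convexHull ℝ V).mem_extremePoints_iff_mem_diff_convexHull_diff.1 hext
      intro hmem
      refine h1.2 (convexHull_mono ?_ hmem)
      intro x hx
      exact ⟨subset_convexHull ℝ V hx.1, hx.2⟩
    have hcl : IsClosed (convexHull ℝ (V \ {p})) :=
      (hVfin.subset Set.diff_subset).isClosed_convexHull ℝ
    obtain ⟨f, u, hfu, hup⟩ :=
      geometric_hahn_banach_closed_point (convex_convexHull ℝ _) hcl hne_hull
    set c := (InnerProductSpace.toDual ℝ (E d)).symm f with hc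
    have hcx : ∀ x : E d, ⟪c, x⟫ = f x := fun x => InnerProductSpace.toDual_symm_apply
    have hstrict : ∀ x ∈ V, x ≠ p → ⟪c, x⟫ < ⟪c, p⟫ := by
      intro x hx hxp
      have hx' : x ∈ convexHull ℝ (V \ {p}) := subset_convexHull ℝ _ ⟨hx, hxp⟩
      rw [hcx, hcx]
      exact lt_trans (hfu x hx') hup
    refine ⟨c, ?_, ?_⟩
    · -- strict ranking
      intro i j hij
      have hp'V : (∑ m : Fin k, ((k - (m : ℕ) : ℕ) : ℝ) • σ (Equiv.swap i j m)) ∈ V :=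
        ⟨fun m => σ (Equiv.swap i j m), hσinj.comp (Equiv.swap i j).injective,
          fun m => hσS _, rfl⟩
      have hdiffv := swap_diff σ i j (ne_of_lt hij)
      have hnat : (k - (j : ℕ) : ℕ) < (k - (i : ℕ) : ℕ) := by
        have := j.isLt; have := Fin.lt_def.1 hij; omega
      have hscal : (((k - (j : ℕ) : ℕ) : ℝ) - ((k - (i : ℕ) : ℕ) : ℝ)) < 0 := by
        have : ((k - (j : ℕ) : ℕ) : ℝ) < ((k - (i : ℕ) : ℕ) : ℝ) := Nat.cast_lt.2 hnat
        linarith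
      have hvne : σ i - σ j ≠ 0 := sub_ne_zero.2 (hσinj.ne (ne_of_lt hij))
      have hpne : (∑ m : Fin k, ((k - (m : ℕ) : ℕ) : ℝ) • σ (Equiv.swap i j m)) ≠ p := by
        intro h
        rw [h, sub_self] at hdiffv
        exact smul_ne_zero (ne_of_lt hscal) hvne hdiffv.symm
      have hlt := hstrict _ hp'V hpne
      have hneg : ⟪c, (∑ m : Fin k, ((k - (m : ℕ) : ℕ) : ℝ) • σ (Equiv.swap i j m)) - p⟫ < 0 := by
        rw [inner_sub_right]; linarith
      rw [hdiffv, real_inner_smul_right, inner_sub_right] at hneg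
      nlinarith [hneg, hscal]
    · -- outside points
      intro s hs hsr
      set l : Fin k := ⟨k - 1, by omega⟩ with hl
      have hp'V : (∑ m : Fin k, ((k - (m : ℕ) : ℕ) : ℝ) • (Function.update σ l s m)) ∈ V := by
        refine ⟨Function.update σ l s, update_inj hσinj hsr l, fun m => ?_, rfl⟩
        by_cases hm : m = l
        · rw [hm, Function.update_self]; exact hs
        · rw [Function.update_of_ne hm]; exact hσS m
      have hdiffv := update_diff σ l s
      have hscal : (0 : ℝ) < ((k - (l : ℕ) : ℕ) : ℝ) := by
        have : 0 < (k - (l : ℕ) : ℕ) := by have := l.isLt; omega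
        exact_mod_cast this
      have hvne : s - σ l ≠ 0 := sub_ne_zero.2 (fun h => hsr ⟨l, h.symm⟩)
      have hpne : (∑ m : Fin k, ((k - (m : ℕ) : ℕ) : ℝ) • (Function.update σ l s m)) ≠ p := by
        intro h
        rw [h, sub_self] at hdiffv
        exact smul_ne_zero (ne_of_gt hscal) hvne hdiffv.symm
      have hlt := hstrict _ hp'V hpne
      have hneg : ⟪c, (∑ m : Fin k, ((k - (m : ℕ) : ℕ) : ℝ) • (Function.update σ l s m)) - p⟫
          < 0 := by
        rw [inner_sub_right]; linarith
      rw [hdiffv, real_inner_smul_right, inner_sub_right] at hneg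
      nlinarith [hneg, hscal]
  · rintro ⟨c, hrank, hout⟩
    have hstrict : ∀ x ∈ V, x ≠ p → ⟪c, x⟫ < ⟪c, p⟫ := by
      rintro x ⟨σ', hinj', hS', rfl⟩ hxp
      have hne : σ' ≠ σ := fun h => hxp (by rw [h])
      have hk := key_strict hk1 hσinj hrank hout hinj' hS' hne
      rw [hpdef, inner_sum_smul, inner_sum_smul]
      exact hk
    exact extreme_of_strict_max hpV hstrict

end
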